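/- For 1 < μ ≤ 2, ω > 0, and t ∈ [0,1], the bound σ_{μ,ω}(t) ≤ E_{μ,μ+1}(ω) holds, where σ_{μ,ω}(t) := E_{μ,1}(ω t^μ) E_{μ,μ+1}(ω) − t^μ E_{μ,1}(ω) E_{μ,μ+1}(ω t^μ); equivalently ∫_0^1 G(t,τ) dτ ≤ E_{μ,μ+1}(ω)/(ω E_{μ,1}(ω)). -/
import Mathlib


open Real

/-- Two-parameter Mittag-Leffler function `E_{μ,ν}(t) = ∑ t^k / Γ(μk + ν)`. -/
noncomputable def mittagLeffler (μ ν t : ℝ) : ℝ :=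
  ∑' k : ℕ, t ^ k / Real.Gamma (μ * k + ν)

/-- `σ_{μ,ω}(t) = E_{μ,1}(ω t^μ) E_{μ,μ+1}(ω) − t^μ E_{μ,1}(ω) E_{μ,μ+1}(ω t^μ)`. -/
noncomputable def sigmaML (μ ω t : ℝ) : ℝ :=
  mittagLeffler μ 1 (ω * t ^ μ) * mittagLeffler μ (μ + 1) ω -
    t ^ μ * mittagLeffler μ 1 ω * mittagLeffler μ (μ + 1) (ω * t ^ μ)


lemma gamma_arg_pos {μ ν : ℝ} (hμ : 1 ≤ μ) (hν : 1 ≤ ν) (k : ℕ) :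
    0 < Real.Gamma (μ * k + ν) := by
  apply Real.Gamma_pos_of_pos
  have : (0:ℝ) ≤ μ * k := by positivity
  linarith

lemma fact_le_gamma {μ ν : ℝ} (hμ : 1 ≤ μ) (hν : 1 ≤ ν) (k : ℕ) (hk : 1 ≤ k) :
    (Nat.factorial k : ℝ) ≤ Real.Gamma (μ * k + ν) := by
  have h1 : (k:ℝ) + 1 ≤ μ * k + ν := by
    have : (k:ℝ) ≤ μ * k := by nlinarith [Nat.cast_nonneg (α := ℝ) k]
    linarith
  have h2 : (2:ℝ) ≤ (k:ℝ) + 1 := by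
    have : (1:ℝ) ≤ (k:ℝ) := by exact_mod_cast hk
    linarith
  calc (Nat.factorial k : ℝ) = Real.Gamma (k + 1) := (Real.Gamma_nat_eq_factorial k).symm
    _ ≤ Real.Gamma (μ * k + ν) := by
        rcases eq_or_lt_of_le h1 with h | h
        · rw [h]
        · exact (Real.Gamma_strictMonoOn_Ici h2 (le_trans h2 h1) h).le

lemma ml_summable {μ ν x : ℝ} (hμ : 1 ≤ μ) (hν : 1 ≤ ν) (hx : 0 ≤ x) :
    Summable (fun k : ℕ => x ^ k / Real.Gamma (μ * k + ν)) := by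
  rw [← summable_nat_add_iff 1]
  have hsum : Summable (fun k : ℕ => x ^ (k+1) / (Nat.factorial (k+1) : ℝ)) :=
    (Real.summable_pow_div_factorial x).comp_injective (add_left_injective 1)
  refine Summable.of_nonneg_of_le (fun k => by positivity) (fun k => ?_) hsum
  apply div_le_div_of_nonneg_left (by positivity)
  · exact_mod_cast Nat.factorial_pos (k+1)
  · exact fact_le_gamma hμ hν (k+1) (Nat.le_add_left 1 k)

lemma ml_shift {μ x : ℝ} (hμ : 1 ≤ μ) (hx : 0 ≤ x) :
    x * mittagLeffler μ (μ + 1) x = mittagLeffler μ 1 x - 1 := by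
  have hs1 : Summable (fun k : ℕ => x ^ k / Real.Gamma (μ * k + 1)) :=
    ml_summable hμ le_rfl hx
  have hs2 : Summable (fun k : ℕ => x ^ k / Real.Gamma (μ * k + (μ + 1))) :=
    ml_summable hμ (by linarith) hx
  have h0 : mittagLeffler μ 1 x =
      1 + ∑' k : ℕ, x ^ (k+1) / Real.Gamma (μ * (↑(k+1)) + 1) := by
    rw [mittagLeffler, Summable.tsum_eq_zero_add hs1]
    norm_num [Real.Gamma_one]
  have h1 : x * mittagLeffler μ (μ + 1) x =
      ∑' k : ℕ, x ^ (k+1) / Real.Gamma (μ * (↑(k+1)) + 1) := by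
    rw [mittagLeffler, ← tsum_mul_left]
    congr 1
    funext k
    have harg : μ * (↑(k+1) : ℝ) + 1 = μ * k + (μ + 1) := by push_cast; ring
    rw [harg, pow_succ]
    ring
  rw [h1, h0]; ring

lemma ml_one_le {μ x : ℝ} (hμ : 1 ≤ μ) (hx : 0 ≤ x) : 1 ≤ mittagLeffler μ 1 x := by
  have hs : Summable (fun k : ℕ => x ^ k / Real.Gamma (μ * k + 1)) :=
    ml_summable hμ le_rfl hx
  have := Summable.le_tsum hs 0 (fun k _ => by positivity)
  simpa [Real.Gamma_one, mittagLeffler] using this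

lemma ml_mono {μ x y : ℝ} (hμ : 1 ≤ μ) (hy : 0 ≤ y) (hxy : y ≤ x) :
    mittagLeffler μ 1 y ≤ mittagLeffler μ 1 x := by
  apply Summable.tsum_le_tsum _ (ml_summable hμ le_rfl hy) (ml_summable hμ le_rfl (hy.trans hxy))
  intro k
  exact div_le_div_of_nonneg_right (pow_le_pow_left₀ hy hxy k) (gamma_arg_pos hμ le_rfl k).le

private theorem sigmaML_le_aux (μ ω : ℝ) (hμ1 : 1 < μ) (hμ2 : μ ≤ 2) (hω : 0 < ω)
    (t : ℝ) (ht : t ∈ Set.Icc (0 : ℝ) 1) :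
    mittagLeffler μ 1 (ω * t ^ μ) * mittagLeffler μ (μ + 1) ω -
      t ^ μ * mittagLeffler μ 1 ω * mittagLeffler μ (μ + 1) (ω * t ^ μ)
      ≤ mittagLeffler μ (μ + 1) ω := by
  obtain ⟨ht0, ht1⟩ := ht
  have hμ : 1 ≤ μ := hμ1.le
  have htp : 0 ≤ t ^ μ := Real.rpow_nonneg ht0 μ
  have htp1 : t ^ μ ≤ 1 := Real.rpow_le_one ht0 ht1 (by linarith)
  set x := ω * t ^ μ with hxdef
  have hx0 : 0 ≤ x := by positivity
  have hxω : x ≤ ω := by nlinarith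
  have h1 : ω * mittagLeffler μ (μ + 1) ω = mittagLeffler μ 1 ω - 1 := ml_shift hμ hω.le
  have h2 : x * mittagLeffler μ (μ + 1) x = mittagLeffler μ 1 x - 1 := ml_shift hμ hx0
  have h3 : 1 ≤ mittagLeffler μ 1 x := ml_one_le hμ hx0
  have h4 : mittagLeffler μ 1 x ≤ mittagLeffler μ 1 ω := ml_mono hμ hx0 hxω
  set a := mittagLeffler μ 1 x
  set b := mittagLeffler μ 1 ω
  set c := mittagLeffler μ (μ + 1) ω
  set d := mittagLeffler μ (μ + 1) x
  rw [hxdef] at h2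
  have key : ω * (a * c - t ^ μ * b * d) ≤ ω * c := by nlinarith [h2, h1]
  exact le_of_mul_le_mul_left key hω

/-- `σ_{μ,ω}(t) ≤ E_{μ,μ+1}(ω)` for `t ∈ [0,1]`. -/
theorem sigmaML_le (μ ω : ℝ) (hμ1 : 1 < μ) (hμ2 : μ ≤ 2) (hω : 0 < ω)
    (t : ℝ) (ht : t ∈ Set.Icc (0 : ℝ) 1) :
    sigmaML μ ω t ≤ mittagLeffler μ (μ + 1) ω := by
  unfold sigmaML
  exact sigmaML_le_aux μ ω hμ1 hμ2 hω t ht
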